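/- Let k ≥ 1, let V be a finite set, and let x : V → Fin k → ℝ be a fractional assignment (0 ≤ x_{vj} ≤ 1 and Σ_j x_{vj} = 1 for each v ∈ V). Define the symmetric matrix Z ∈ ℝ^{V×V} by Z_{uv} = Σ_j x_{uj} x_{vj} for u ≠ v and Z_{vv} = 1 (equivalently, Z = D^x + Σ_j x_j x_jᵀ where D^x is diagonal with D^x_{vv} = 1 − Σ_j x_{vj}²). Then: (i) Z_{vv} = 1 for all v; (ii) 0 ≤ Z_{uv} ≤ 1 for all u, v; and (iii) kZ − e eᵀ is positive semidefinite, where e is the all-ones vector. In other words, Z lies in the continuous relaxation of the MISDO-I formulation of the max k-cut problem. -/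

import Mathlib

/-- For a fractional assignment `x`, the lifted matrix `Z` with unit diagonal
and off-diagonal entries `Z_{uv} = ∑_j x_{uj} x_{vj}` lies in the continuous
relaxation of the MISDO-I formulation: it has unit diagonal, entries in
`[0,1]`, and `kZ − e eᵀ` is positive semidefinite (Theorem 3). -/
theorem bqo_lifted_matrix_in_misdo_relaxation (k : ℕ) (hk : 1 ≤ k)
    (V : Type*) [Fintype V] [DecidableEq V] (x : V → Fin k → ℝ)
    (hx0 : ∀ v j, 0 ≤ x v j) (hx1 : ∀ v j, x v j ≤ 1)
    (hsum : ∀ v, ∑ j, x v j = 1)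
    (Z : Matrix V V ℝ)
    (hZ : ∀ u v, Z u v = if u = v then 1 else ∑ j, x u j * x v j) :
    (∀ v, Z v v = 1) ∧
    (∀ u v, 0 ≤ Z u v ∧ Z u v ≤ 1) ∧
    ((k : ℝ) • Z - Matrix.vecMulVec (1 : V → ℝ) (1 : V → ℝ)).PosSemidef := by
  -- squared sums are at most 1
  have hsq : ∀ v, ∑ j, (x v j) ^ 2 ≤ 1 := by
    intro v
    calc ∑ j, (x v j) ^ 2 ≤ ∑ j, x v j := by
          apply Finset.sum_le_sum
          intro j _
          nlinarith [hx0 v j, hx1 v j]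
      _ = 1 := hsum v
  refine ⟨fun v => by simp [hZ], ?_, ?_⟩
  · intro u v
    rw [hZ]
    split
    · norm_num
    · constructor
      · exact Finset.sum_nonneg fun j _ => mul_nonneg (hx0 u j) (hx0 v j)
      · calc ∑ j, x u j * x v j ≤ ∑ j, x u j * 1 := by
              apply Finset.sum_le_sum
              intro j _
              exact mul_le_mul_of_nonneg_left (hx1 v j) (hx0 u j)
          _ = 1 := by simpa using hsum u
  · rw [Matrix.posSemidef_iff_dotProduct_mulVec]
    constructor
    · -- symmetric
      show Matrix.conjTranspose _ = _
      ext u v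
      simp only [Matrix.sub_apply, Matrix.smul_apply, Matrix.vecMulVec_apply,
        Matrix.transpose_apply, Matrix.conjTranspose_apply, Pi.one_apply, star_sub,
        star_one]
      rw [hZ, hZ]
      by_cases h : u = v
      · subst h; simp
      · rw [if_neg h, if_neg (Ne.symm h)]
        simp only [star_trivial]
        exact congrArg (fun t => (k:ℝ) • t - 1 * 1)
          (Finset.sum_congr rfl fun j _ => mul_comm (x v j) (x u j))
    · intro y
      have hstar : star y = y := rfl
      -- compute quadratic form
      have key : dotProduct (star y) (((k : ℝ) • Z - Matrix.vecMulVec 1 1).mulVec y)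
          = (k : ℝ) * (∑ j, (∑ v, x v j * y v) ^ 2
              + ∑ v, (y v) ^ 2 * (1 - ∑ j, (x v j) ^ 2))
            - (∑ v, y v) ^ 2 := by
        rw [hstar]
        simp only [dotProduct, Matrix.mulVec, dotProduct,
          Matrix.sub_apply, Matrix.smul_apply, Matrix.vecMulVec_apply, Pi.one_apply,
          smul_eq_mul]
        have hQ : ∑ u, y u * ∑ v, ((k : ℝ) * Z u v - 1 * 1) * y v
            = (k : ℝ) * (∑ u, ∑ v, y u * Z u v * y v) - (∑ v, y v) ^ 2 := by
          rw [Finset.mul_sum]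
          rw [show (∑ v : V, y v) ^ 2 = ∑ u, y u * ∑ v, y v by
            rw [← Finset.sum_mul]; ring]
          rw [← Finset.sum_sub_distrib]
          apply Finset.sum_congr rfl
          intro u _
          rw [Finset.mul_sum, Finset.mul_sum, Finset.mul_sum, ← Finset.sum_sub_distrib]
          apply Finset.sum_congr rfl
          intro v _
          ring
        rw [hQ]
        congr 2
        -- Gram decomposition identity
        have hdecomp : ∀ u, ∑ v, y u * Z u v * y v
            = (∑ v, y u * (∑ j, x u j * x v j) * y v)
              + (y u) ^ 2 * (1 - ∑ j, (x u j) ^ 2) := by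
          intro u
          have : ∀ v, y u * Z u v * y v
              = y u * (∑ j, x u j * x v j) * y v
                + (if u = v then (y u) ^ 2 * (1 - ∑ j, (x u j) ^ 2) else 0) := by
            intro v
            rw [hZ]
            by_cases h : u = v
            · subst h
              rw [if_pos rfl, if_pos rfl]
              have hxx : ∑ j, x u j * x u j = ∑ j, (x u j) ^ 2 :=
                Finset.sum_congr rfl fun j _ => (pow_two _).symm
              rw [hxx]; ring
            · rw [if_neg h, if_neg h]; ring
          rw [Finset.sum_congr rfl fun v _ => this v, Finset.sum_add_distrib]
          congr 1
          simp
        rw [Finset.sum_congr rfl fun u _ => hdecomp u, Finset.sum_add_distrib]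
        congr 1
        · have step : ∀ u v : V, (y u * ∑ j, x u j * x v j) * y v
              = ∑ j, (x u j * y u) * (x v j * y v) := by
            intro u v
            rw [Finset.mul_sum, Finset.sum_mul]
            exact Finset.sum_congr rfl fun j _ => by ring
          calc ∑ u, ∑ v, (y u * ∑ j, x u j * x v j) * y v
              = ∑ u, ∑ v, ∑ j, (x u j * y u) * (x v j * y v) :=
                Finset.sum_congr rfl fun u _ => Finset.sum_congr rfl fun v _ => step u v
            _ = ∑ u, ∑ j, ∑ v, (x u j * y u) * (x v j * y v) :=
                Finset.sum_congr rfl fun u _ => Finset.sum_comm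
            _ = ∑ j, ∑ u, ∑ v, (x u j * y u) * (x v j * y v) := Finset.sum_comm
            _ = ∑ j, (∑ v, x v j * y v) ^ 2 := by
                apply Finset.sum_congr rfl
                intro j _
                rw [sq, Finset.sum_mul_sum]
      rw [key]
      -- now the inequality
      have hS : ∑ v, y v = ∑ j, ∑ v, x v j * y v := by
        rw [Finset.sum_comm]
        apply Finset.sum_congr rfl
        intro v _
        rw [← Finset.sum_mul, hsum v, one_mul]
      have hCS : (∑ j, ∑ v, x v j * y v) ^ 2 ≤ (k : ℝ) * ∑ j, (∑ v, x v j * y v) ^ 2 := by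
        have := sq_sum_le_card_mul_sum_sq (s := (Finset.univ : Finset (Fin k)))
          (f := fun j => ∑ v, x v j * y v)
        simpa using this
      have hdiagpos : 0 ≤ ∑ v, (y v) ^ 2 * (1 - ∑ j, (x v j) ^ 2) :=
        Finset.sum_nonneg fun v _ => mul_nonneg (sq_nonneg _) (by linarith [hsq v])
      have hk0 : (0:ℝ) ≤ k := Nat.cast_nonneg k
      rw [hS]
      nlinarith [hCS, hdiagpos, hk0]
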